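/- There is a constant C > 0 such that for every t ≠ 0 and every Schwartz function f on ℝ³, the function (cos(tΔ)f)(x) := (2π)^{−3} ∫_{ℝ³} e^{i x·ξ} cos(t|ξ|²) f̂(ξ) dξ, where f̂(ξ) := ∫_{ℝ³} e^{−i y·ξ} f(y) dy, satisfies ‖cos(tΔ)f‖_{L^∞(ℝ³)} ≤ C |t|^{−3/2} ‖f‖_{L¹(ℝ³)}. -/

import Mathlib

noncomputable section

open MeasureTheory Real
open scoped RealInnerProductSpace
open scoped FourierTransform Topology

namespace Stmt3Aux

abbrev V3 := EuclideanSpace ℝ (Fin 3)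

open Complex in
lemma gauss3 {b : ℂ} (hb : 0 < b.re) (w : V3) :
    ∫ v : V3, Complex.exp (- b * ‖v‖^2 + Complex.I * ⟪w, v⟫) =
      (π / b) ^ (3 / 2 : ℂ) * Complex.exp (Complex.I ^ 2 * ‖w‖^2 / (4 * b)) := by
  rw [GaussianFourier.integral_cexp_neg_mul_sq_norm_add hb Complex.I w]
  norm_num [finrank_euclideanSpace]

open Complex in
lemma abs_term_le {b : ℂ} (hb : 0 < b.re) {t : ℝ} (ht0 : t ≠ 0) (ht : |t| ≤ ‖b‖)
    (w : V3) :
    ‖(↑π / b) ^ (3/2 : ℂ) * Complex.exp (Complex.I ^ 2 * (‖w‖:ℂ)^2 / (4 * b))‖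
      ≤ (π / |t|) ^ ((3:ℝ)/2) := by
  have hbne : b ≠ 0 := fun h => by simp [h] at hb
  have hpb : (↑π / b : ℂ) ≠ 0 := div_ne_zero (by exact_mod_cast Real.pi_ne_zero) hbne
  have ht' : 0 < |t| := abs_pos.mpr ht0
  rw [norm_mul]
  have h1 : ‖(↑π / b : ℂ) ^ (3/2 : ℂ)‖ = (π / ‖b‖) ^ ((3:ℝ)/2) := by
    rw [Complex.norm_cpow_of_ne_zero hpb]
    norm_num [norm_div, Complex.norm_real, _root_.abs_of_nonneg Real.pi_nonneg]
  have h2 : ‖Complex.exp (Complex.I ^ 2 * (‖w‖:ℂ)^2 / (4 * b))‖ ≤ 1 := by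
    rw [Complex.norm_exp, Real.exp_le_one_iff]
    have : Complex.I ^ 2 * (‖w‖:ℂ)^2 / (4 * b) = ((-(‖w‖^2) : ℝ) : ℂ) * (4 * b)⁻¹ := by
      rw [Complex.I_sq]; push_cast; ring
    rw [this, Complex.re_ofReal_mul]
    have h4 : 0 ≤ ((4 * b)⁻¹).re := by
      rw [Complex.inv_re]
      apply div_nonneg _ (Complex.normSq_nonneg _)
      simp only [Complex.mul_re]
      norm_num
      linarith
    nlinarith [sq_nonneg ‖w‖]
  calc ‖(↑π / b : ℂ) ^ (3/2 : ℂ)‖ * ‖Complex.exp (Complex.I ^ 2 * (‖w‖:ℂ)^2 / (4 * b))‖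
      ≤ (π / ‖b‖) ^ ((3:ℝ)/2) * 1 := by
        rw [h1]; exact mul_le_mul_of_nonneg_left h2 (by positivity)
    _ ≤ (π / |t|) ^ ((3:ℝ)/2) := by
        rw [mul_one]
        gcongr

open Complex in
lemma kernel_bound {ε t : ℝ} (hε : 0 < ε) (ht : t ≠ 0) (x y : V3) :
    ‖∫ ξ : V3, Complex.exp (-(ε:ℂ) * ‖ξ‖^2) *
      (Complex.exp (Complex.I * ((⟪x, ξ⟫ : ℝ) : ℂ)) * ((Real.cos (t * ‖ξ‖ ^ 2) : ℝ) : ℂ) *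
        Complex.exp (-Complex.I * ((⟪y, ξ⟫ : ℝ) : ℂ)))‖ ≤ (π / |t|) ^ ((3:ℝ)/2) := by
  set b₁ : ℂ := ↑ε - ↑t * Complex.I with hb₁def
  set b₂ : ℂ := ↑ε + ↑t * Complex.I with hb₂def
  have hb₁ : 0 < b₁.re := by simp [hb₁def, hε]
  have hb₂ : 0 < b₂.re := by simp [hb₂def, hε]
  have habs₁ : |t| ≤ ‖b₁‖ := by
    have := Complex.abs_im_le_norm b₁
    simpa [hb₁def] using this
  have habs₂ : |t| ≤ ‖b₂‖ := by
    have := Complex.abs_im_le_norm b₂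
    simpa [hb₂def] using this
  have key : ∀ (A B C E : ℂ), Complex.exp A *
      (Complex.exp B * ((Complex.exp C + Complex.exp (-C)) / 2) * Complex.exp E)
      = (Complex.exp (A + B + C + E) + Complex.exp (A + B + -C + E)) / 2 := by
    intro A B C E
    rw [Complex.exp_add, Complex.exp_add, Complex.exp_add, Complex.exp_add, Complex.exp_add,
      Complex.exp_add]
    ring
  have hpt : ∀ ξ : V3, Complex.exp (-(ε:ℂ) * ‖ξ‖^2) *
      (Complex.exp (Complex.I * ((⟪x, ξ⟫ : ℝ) : ℂ)) * ((Real.cos (t * ‖ξ‖ ^ 2) : ℝ) : ℂ) *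
        Complex.exp (-Complex.I * ((⟪y, ξ⟫ : ℝ) : ℂ)))
      = (Complex.exp (-b₁ * ‖ξ‖^2 + Complex.I * ((⟪x - y, ξ⟫ : ℝ) : ℂ))
        + Complex.exp (-b₂ * ‖ξ‖^2 + Complex.I * ((⟪x - y, ξ⟫ : ℝ) : ℂ))) / 2 := by
    intro ξ
    rw [Complex.ofReal_cos, Complex.cos, show (-(↑(t * ‖ξ‖ ^ 2)) * Complex.I : ℂ)
      = -(↑(t * ‖ξ‖ ^ 2) * Complex.I) by ring]
    rw [key]
    rw [inner_sub_left]
    push_cast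
    simp only [hb₁def, hb₂def]
    congr 2 <;> ring
  rw [integral_congr_ae (Filter.Eventually.of_forall hpt)]
  have hint₁ : Integrable (fun ξ : V3 =>
      Complex.exp (-b₁ * ‖ξ‖^2 + Complex.I * ((⟪x - y, ξ⟫ : ℝ) : ℂ))) :=
    GaussianFourier.integrable_cexp_neg_mul_sq_norm_add hb₁ Complex.I (x - y)
  have hint₂ : Integrable (fun ξ : V3 =>
      Complex.exp (-b₂ * ‖ξ‖^2 + Complex.I * ((⟪x - y, ξ⟫ : ℝ) : ℂ))) :=
    GaussianFourier.integrable_cexp_neg_mul_sq_norm_add hb₂ Complex.I (x - y)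
  rw [integral_div, integral_add hint₁ hint₂, gauss3 hb₁ (x - y), gauss3 hb₂ (x - y)]
  have B₁ := abs_term_le hb₁ ht habs₁ (x - y)
  have B₂ := abs_term_le hb₂ ht habs₂ (x - y)
  calc ‖((↑π / b₁) ^ (3/2 : ℂ) * Complex.exp (Complex.I ^ 2 * (‖x - y‖:ℂ)^2 / (4 * b₁))
        + (↑π / b₂) ^ (3/2 : ℂ) * Complex.exp (Complex.I ^ 2 * (‖x - y‖:ℂ)^2 / (4 * b₂))) / 2‖
      ≤ (‖(↑π / b₁) ^ (3/2 : ℂ) * Complex.exp (Complex.I ^ 2 * (‖x - y‖:ℂ)^2 / (4 * b₁))‖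
        + ‖(↑π / b₂) ^ (3/2 : ℂ) * Complex.exp (Complex.I ^ 2 * (‖x - y‖:ℂ)^2 / (4 * b₂))‖) / 2 := by
        rw [norm_div]
        gcongr
        · exact norm_add_le _ _
        · norm_num
    _ ≤ ((π / |t|) ^ ((3:ℝ)/2) + (π / |t|) ^ ((3:ℝ)/2)) / 2 := by gcongr
    _ = (π / |t|) ^ ((3:ℝ)/2) := by ring


lemma exp_norm_eq (ε : ℝ) (v : V3) :
    ‖Complex.exp (-(ε:ℂ) * ‖v‖^2)‖ = rexp (-(ε * ‖v‖^2)) := by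
  have h : (-(ε:ℂ) * (‖v‖:ℂ)^2) = ((-(ε * ‖v‖^2) : ℝ) : ℂ) := by push_cast; ring
  rw [h, Complex.norm_exp_ofReal]

lemma gauss_int {ε : ℝ} (hε : 0 < ε) :
    Integrable (fun ξ : V3 => rexp (-(ε * ‖ξ‖^2))) := by
  have h := (GaussianFourier.integrable_cexp_neg_mul_sq_norm_add (V := V3) (b := (ε:ℂ))
    (by simpa using hε) 0 (0 : V3)).norm
  have he : ∀ v : V3, ‖Complex.exp (-(ε:ℂ) * ‖v‖^2 + 0 * ((⟪(0:V3), v⟫ : ℝ) : ℂ))‖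
      = rexp (-(ε * ‖v‖^2)) := by
    intro v
    rw [zero_mul, add_zero, exp_norm_eq]
  simpa only [he] using h

lemma norm_exp_I_mul (r : ℝ) : ‖Complex.exp (Complex.I * (r : ℂ))‖ = 1 := by
  rw [mul_comm, Complex.norm_exp_ofReal_mul_I]

lemma norm_exp_neg_I_mul (r : ℝ) : ‖Complex.exp (-Complex.I * (r : ℂ))‖ = 1 := by
  have : (-Complex.I * (r : ℂ)) = ((-r : ℝ) : ℂ) * Complex.I := by push_cast; ring
  rw [this, Complex.norm_exp_ofReal_mul_I]

lemma Ieps_bound {ε t : ℝ} (hε : 0 < ε) (ht : t ≠ 0) (f : SchwartzMap V3 ℂ) (x : V3) :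
    ‖∫ ξ : V3, Complex.exp (-(ε:ℂ) * ‖ξ‖^2) *
        (Complex.exp (Complex.I * ((⟪x, ξ⟫ : ℝ) : ℂ)) * ((Real.cos (t * ‖ξ‖ ^ 2) : ℝ) : ℂ) *
          ∫ y : V3, Complex.exp (-Complex.I * ((⟪y, ξ⟫ : ℝ) : ℂ)) * f y)‖
      ≤ (π / |t|) ^ ((3:ℝ)/2) * ∫ y : V3, ‖f y‖ := by
  set Φ : V3 → V3 → ℂ := fun ξ y => Complex.exp (-(ε:ℂ) * ‖ξ‖^2) *
    (Complex.exp (Complex.I * ((⟪x, ξ⟫ : ℝ) : ℂ)) * ((Real.cos (t * ‖ξ‖ ^ 2) : ℝ) : ℂ) *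
      Complex.exp (-Complex.I * ((⟪y, ξ⟫ : ℝ) : ℂ))) * f y with hΦdef
  have h1 : ∀ ξ : V3, Complex.exp (-(ε:ℂ) * ‖ξ‖^2) *
        (Complex.exp (Complex.I * ((⟪x, ξ⟫ : ℝ) : ℂ)) * ((Real.cos (t * ‖ξ‖ ^ 2) : ℝ) : ℂ) *
          ∫ y : V3, Complex.exp (-Complex.I * ((⟪y, ξ⟫ : ℝ) : ℂ)) * f y)
      = ∫ y : V3, Φ ξ y := by
    intro ξ
    rw [show Complex.exp (-(ε:ℂ) * ‖ξ‖^2) *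
        (Complex.exp (Complex.I * ((⟪x, ξ⟫ : ℝ) : ℂ)) * ((Real.cos (t * ‖ξ‖ ^ 2) : ℝ) : ℂ) *
          ∫ y : V3, Complex.exp (-Complex.I * ((⟪y, ξ⟫ : ℝ) : ℂ)) * f y)
      = (Complex.exp (-(ε:ℂ) * ‖ξ‖^2) *
        (Complex.exp (Complex.I * ((⟪x, ξ⟫ : ℝ) : ℂ)) * ((Real.cos (t * ‖ξ‖ ^ 2) : ℝ) : ℂ))) *
          ∫ y : V3, Complex.exp (-Complex.I * ((⟪y, ξ⟫ : ℝ) : ℂ)) * f y by ring,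
      ← integral_const_mul]
    exact integral_congr_ae (Filter.Eventually.of_forall fun y => by rw [hΦdef]; try ring)
  have hΦcont : Continuous (Function.uncurry Φ) := by
    rw [hΦdef]
    unfold Function.uncurry
    have h1 : Continuous (fun p : V3 × V3 => (⟪p.2, p.1⟫ : ℝ)) :=
      continuous_inner.comp (continuous_snd.prodMk continuous_fst)
    have h2 : Continuous (fun p : V3 × V3 => (⟪x, p.1⟫ : ℝ)) :=
      continuous_inner.comp (continuous_const.prodMk continuous_fst)
    have hn : Continuous (fun p : V3 × V3 => ‖p.1‖^2) :=
      (continuous_norm.comp continuous_fst).pow 2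
    refine Continuous.mul (Continuous.mul ?_ (Continuous.mul (Continuous.mul ?_ ?_) ?_))
      (f.continuous.comp continuous_snd)
    · exact Complex.continuous_exp.comp (continuous_const.mul
        ((Complex.continuous_ofReal.comp (continuous_norm.comp continuous_fst)).pow 2))
    · exact Complex.continuous_exp.comp (continuous_const.mul (Complex.continuous_ofReal.comp h2))
    · exact Complex.continuous_ofReal.comp (Real.continuous_cos.comp (continuous_const.mul hn))
    · exact Complex.continuous_exp.comp (continuous_const.mul (Complex.continuous_ofReal.comp h1))
  have hbint : Integrable (fun p : V3 × V3 => rexp (-(ε * ‖p.1‖^2)) * ‖f p.2‖)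
      (volume.prod volume) := (gauss_int hε).mul_prod f.integrable.norm
  have hΦint : Integrable (Function.uncurry Φ) (volume.prod volume) := by
    refine hbint.mono' hΦcont.aestronglyMeasurable (Filter.Eventually.of_forall fun p => ?_)
    have e3 : ‖((Real.cos (t * ‖p.1‖ ^ 2) : ℝ) : ℂ)‖ ≤ 1 := by
      rw [Complex.norm_real, Real.norm_eq_abs]
      exact Real.abs_cos_le_one _
    simp only [Function.uncurry, hΦdef, norm_mul, exp_norm_eq, norm_exp_I_mul,
      norm_exp_neg_I_mul, mul_one, one_mul]
    exact mul_le_mul_of_nonneg_right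
      (mul_le_of_le_one_right (Real.exp_pos _).le e3) (norm_nonneg _)
  calc ‖∫ ξ : V3, Complex.exp (-(ε:ℂ) * ‖ξ‖^2) *
        (Complex.exp (Complex.I * ((⟪x, ξ⟫ : ℝ) : ℂ)) * ((Real.cos (t * ‖ξ‖ ^ 2) : ℝ) : ℂ) *
          ∫ y : V3, Complex.exp (-Complex.I * ((⟪y, ξ⟫ : ℝ) : ℂ)) * f y)‖
      = ‖∫ y : V3, ∫ ξ : V3, Φ ξ y‖ := by
        rw [integral_congr_ae (Filter.Eventually.of_forall h1), integral_integral_swap hΦint]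
    _ = ‖∫ y : V3, (∫ ξ : V3, Complex.exp (-(ε:ℂ) * ‖ξ‖^2) *
          (Complex.exp (Complex.I * ((⟪x, ξ⟫ : ℝ) : ℂ)) * ((Real.cos (t * ‖ξ‖ ^ 2) : ℝ) : ℂ) *
            Complex.exp (-Complex.I * ((⟪y, ξ⟫ : ℝ) : ℂ)))) * f y‖ := by
        congr 1
        refine integral_congr_ae (Filter.Eventually.of_forall fun y => ?_)
        dsimp only
        rw [← integral_mul_const]
    _ ≤ ∫ y : V3, ‖(∫ ξ : V3, Complex.exp (-(ε:ℂ) * ‖ξ‖^2) *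
          (Complex.exp (Complex.I * ((⟪x, ξ⟫ : ℝ) : ℂ)) * ((Real.cos (t * ‖ξ‖ ^ 2) : ℝ) : ℂ) *
            Complex.exp (-Complex.I * ((⟪y, ξ⟫ : ℝ) : ℂ)))) * f y‖ :=
        norm_integral_le_integral_norm _
    _ ≤ ∫ y : V3, (π / |t|) ^ ((3:ℝ)/2) * ‖f y‖ := by
        refine integral_mono_of_nonneg (Filter.Eventually.of_forall fun y => norm_nonneg _)
          (f.integrable.norm.const_mul _) (Filter.Eventually.of_forall fun y => ?_)
        dsimp only
        rw [norm_mul]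
        exact mul_le_mul_of_nonneg_right (kernel_bound hε ht x y) (norm_nonneg _)
    _ = (π / |t|) ^ ((3:ℝ)/2) * ∫ y : V3, ‖f y‖ := integral_const_mul _ _


open FourierTransform in
lemma g_integrable (f : SchwartzMap V3 ℂ) :
    Integrable (fun ξ : V3 => ∫ y : V3, Complex.exp (-Complex.I * ((⟪y, ξ⟫ : ℝ) : ℂ)) * f y) := by
  have hgeq : (fun ξ : V3 => ∫ y : V3, Complex.exp (-Complex.I * ((⟪y, ξ⟫ : ℝ) : ℂ)) * f y)
      = fun ξ : V3 => 𝓕 ⇑f ((2 * π)⁻¹ • ξ) := by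
    funext ξ
    rw [Real.fourier_eq']
    refine integral_congr_ae (Filter.Eventually.of_forall fun y => ?_)
    dsimp only
    rw [smul_eq_mul, real_inner_smul_right]
    congr 1
    have h : -2 * π * ((2 * π)⁻¹ * ⟪y, ξ⟫) = -⟪y, ξ⟫ := by
      have h2 : (2 * π) ≠ 0 := by positivity
      field_simp
    rw [h]
    push_cast
    ring
  rw [hgeq]
  have hFT : Integrable (𝓕 ⇑f) volume := by
    have h := (SchwartzMap.fourierTransformCLM ℂ f).integrable (μ := volume)
    simpa only [SchwartzMap.fourierTransformCLM_apply, SchwartzMap.fourier_coe] using h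
  exact hFT.comp_smul (inv_ne_zero (by positivity))

lemma main_bound {t : ℝ} (ht : t ≠ 0) (f : SchwartzMap V3 ℂ) (x : V3) :
    ‖∫ ξ : V3,
        Complex.exp (Complex.I * ((⟪x, ξ⟫ : ℝ) : ℂ)) * ((Real.cos (t * ‖ξ‖ ^ 2) : ℝ) : ℂ) *
          ∫ y : V3, Complex.exp (-Complex.I * ((⟪y, ξ⟫ : ℝ) : ℂ)) * f y‖
      ≤ (π / |t|) ^ ((3:ℝ)/2) * ∫ y : V3, ‖f y‖ := by
  have hg := g_integrable f
  have hcont1 : Continuous (fun ξ : V3 =>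
      Complex.exp (Complex.I * ((⟪x, ξ⟫ : ℝ) : ℂ)) * ((Real.cos (t * ‖ξ‖ ^ 2) : ℝ) : ℂ)) := by
    have h2 : Continuous (fun ξ : V3 => (⟪x, ξ⟫ : ℝ)) :=
      continuous_inner.comp (continuous_const.prodMk continuous_id)
    exact (Complex.continuous_exp.comp
        (continuous_const.mul (Complex.continuous_ofReal.comp h2))).mul
      (Complex.continuous_ofReal.comp (Real.continuous_cos.comp
        (continuous_const.mul ((continuous_norm.pow 2)))))
  have hH : AEStronglyMeasurable (fun ξ : V3 =>
      Complex.exp (Complex.I * ((⟪x, ξ⟫ : ℝ) : ℂ)) * ((Real.cos (t * ‖ξ‖ ^ 2) : ℝ) : ℂ) *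
        ∫ y : V3, Complex.exp (-Complex.I * ((⟪y, ξ⟫ : ℝ) : ℂ)) * f y) volume :=
    hcont1.aestronglyMeasurable.mul hg.1
  have hεpos : ∀ n : ℕ, (0:ℝ) < ((n:ℝ)+1)⁻¹ := fun n => by positivity
  have htends : Filter.Tendsto (fun n : ℕ => ∫ ξ : V3,
      Complex.exp (-((((n:ℝ)+1)⁻¹ : ℝ):ℂ) * ‖ξ‖^2) *
        (Complex.exp (Complex.I * ((⟪x, ξ⟫ : ℝ) : ℂ)) * ((Real.cos (t * ‖ξ‖ ^ 2) : ℝ) : ℂ) *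
          ∫ y : V3, Complex.exp (-Complex.I * ((⟪y, ξ⟫ : ℝ) : ℂ)) * f y))
      Filter.atTop (𝓝 (∫ ξ : V3,
        Complex.exp (Complex.I * ((⟪x, ξ⟫ : ℝ) : ℂ)) * ((Real.cos (t * ‖ξ‖ ^ 2) : ℝ) : ℂ) *
          ∫ y : V3, Complex.exp (-Complex.I * ((⟪y, ξ⟫ : ℝ) : ℂ)) * f y)) := by
    refine tendsto_integral_of_dominated_convergence
      (fun ξ => ‖∫ y : V3, Complex.exp (-Complex.I * ((⟪y, ξ⟫ : ℝ) : ℂ)) * f y‖)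
      (fun n => ?_) hg.norm (fun n => Filter.Eventually.of_forall fun ξ => ?_)
      (Filter.Eventually.of_forall fun ξ => ?_)
    · have hc : Continuous (fun ξ : V3 => Complex.exp (-((((n:ℝ)+1)⁻¹ : ℝ):ℂ) * ‖ξ‖^2)) :=
        Complex.continuous_exp.comp (continuous_const.mul
          ((Complex.continuous_ofReal.comp continuous_norm).pow 2))
      exact (hc.aestronglyMeasurable).mul hH
    · have e1 : ‖Complex.exp (-((((n:ℝ)+1)⁻¹ : ℝ):ℂ) * ‖ξ‖^2)‖ ≤ 1 := by
        rw [exp_norm_eq, Real.exp_le_one_iff]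
        simp only [neg_nonpos]
        positivity
      have e3 : ‖((Real.cos (t * ‖ξ‖ ^ 2) : ℝ) : ℂ)‖ ≤ 1 := by
        rw [Complex.norm_real, Real.norm_eq_abs]
        exact Real.abs_cos_le_one _
      have e2 := norm_exp_I_mul (⟪x, ξ⟫ : ℝ)
      rw [norm_mul, norm_mul, norm_mul, e2, one_mul]
      refine le_trans (mul_le_mul e1 (mul_le_mul_of_nonneg_right e3 (norm_nonneg _))
        (mul_nonneg (norm_nonneg _) (norm_nonneg _)) zero_le_one) ?_
      rw [one_mul, one_mul]
    · have h0 : Filter.Tendsto (fun n : ℕ => (((n:ℝ)+1)⁻¹ : ℝ)) Filter.atTop (𝓝 0) := by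
        simpa only [one_div] using tendsto_one_div_add_atTop_nhds_zero_nat (𝕜 := ℝ)
      have hc : Continuous (fun r : ℝ => Complex.exp (-(r:ℂ) * ‖ξ‖^2)) :=
        Complex.continuous_exp.comp ((Complex.continuous_ofReal.neg).mul continuous_const)
      have := ((hc.tendsto 0).comp h0).mul_const
        (Complex.exp (Complex.I * ((⟪x, ξ⟫ : ℝ) : ℂ)) * ((Real.cos (t * ‖ξ‖ ^ 2) : ℝ) : ℂ) *
          ∫ y : V3, Complex.exp (-Complex.I * ((⟪y, ξ⟫ : ℝ) : ℂ)) * f y)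
      simpa using this
  have hbd : ∀ n : ℕ, ‖∫ ξ : V3,
      Complex.exp (-((((n:ℝ)+1)⁻¹ : ℝ):ℂ) * ‖ξ‖^2) *
        (Complex.exp (Complex.I * ((⟪x, ξ⟫ : ℝ) : ℂ)) * ((Real.cos (t * ‖ξ‖ ^ 2) : ℝ) : ℂ) *
          ∫ y : V3, Complex.exp (-Complex.I * ((⟪y, ξ⟫ : ℝ) : ℂ)) * f y)‖
      ≤ (π / |t|) ^ ((3:ℝ)/2) * ∫ y : V3, ‖f y‖ :=
    fun n => Ieps_bound (hεpos n) ht f x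
  exact le_of_tendsto htends.norm (Filter.Eventually.of_forall hbd)

end Stmt3Aux


open Stmt3Aux

/-- the free beam propagator `cos(tΔ)`, defined on Schwartz functions via the
Fourier multiplier with symbol `cos(t|ξ|²)`, maps `L¹(ℝ³) → L^∞(ℝ³)` with norm `≲ |t|^{-3/2}`. -/
theorem stmt3 :
    ∃ C : ℝ, 0 < C ∧ ∀ t : ℝ, t ≠ 0 →
      ∀ f : SchwartzMap (EuclideanSpace ℝ (Fin 3)) ℂ, ∀ x : EuclideanSpace ℝ (Fin 3),
      ‖((((2 * Real.pi) ^ 3)⁻¹ : ℝ) : ℂ) *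
          ∫ ξ : EuclideanSpace ℝ (Fin 3),
            Complex.exp (Complex.I * ((⟪x, ξ⟫ : ℝ) : ℂ)) *
              ((Real.cos (t * ‖ξ‖ ^ 2) : ℝ) : ℂ) *
              ∫ y : EuclideanSpace ℝ (Fin 3),
                Complex.exp (-Complex.I * ((⟪y, ξ⟫ : ℝ) : ℂ)) * f y‖
        ≤ C * |t| ^ (-(3 : ℝ) / 2) * ∫ y : EuclideanSpace ℝ (Fin 3), ‖f y‖ := by
  refine ⟨π ^ ((3:ℝ)/2), Real.rpow_pos_of_pos Real.pi_pos _, fun t ht f x => ?_⟩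
  have hmb := main_bound ht f x
  have hfn : (0:ℝ) ≤ ∫ y : V3, ‖f y‖ := integral_nonneg fun y => norm_nonneg _
  have hsplit : (π / |t|) ^ ((3:ℝ)/2) = π ^ ((3:ℝ)/2) * |t| ^ (-(3:ℝ)/2) := by
    rw [Real.div_rpow Real.pi_nonneg (abs_nonneg t), div_eq_mul_inv,
      show (-(3:ℝ)/2) = -((3:ℝ)/2) by norm_num, Real.rpow_neg (abs_nonneg t)]
  have hc : ‖((((2 * Real.pi) ^ 3)⁻¹ : ℝ) : ℂ)‖ ≤ 1 := by
    rw [Complex.norm_real, Real.norm_eq_abs, abs_of_pos (by positivity)]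
    rw [inv_le_one_iff₀]
    right
    have h1 : (1:ℝ) ≤ 2*π := by nlinarith [Real.pi_gt_three]
    exact one_le_pow₀ h1
  calc ‖((((2 * Real.pi) ^ 3)⁻¹ : ℝ) : ℂ) * ∫ ξ : V3,
          Complex.exp (Complex.I * ((⟪x, ξ⟫ : ℝ) : ℂ)) * ((Real.cos (t * ‖ξ‖ ^ 2) : ℝ) : ℂ) *
            ∫ y : V3, Complex.exp (-Complex.I * ((⟪y, ξ⟫ : ℝ) : ℂ)) * f y‖
      = ‖((((2 * Real.pi) ^ 3)⁻¹ : ℝ) : ℂ)‖ * ‖∫ ξ : V3,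
          Complex.exp (Complex.I * ((⟪x, ξ⟫ : ℝ) : ℂ)) * ((Real.cos (t * ‖ξ‖ ^ 2) : ℝ) : ℂ) *
            ∫ y : V3, Complex.exp (-Complex.I * ((⟪y, ξ⟫ : ℝ) : ℂ)) * f y‖ := norm_mul _ _
    _ ≤ 1 * ((π / |t|) ^ ((3:ℝ)/2) * ∫ y : V3, ‖f y‖) := by
        exact mul_le_mul hc hmb (norm_nonneg _) zero_le_one
    _ = π ^ ((3:ℝ)/2) * |t| ^ (-(3:ℝ)/2) * ∫ y : V3, ‖f y‖ := by
        rw [one_mul, hsplit, mul_assoc]
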